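/- A commutative ring R satisfies BLR-1 (i.e., I ∩ J = I·(I→J) for all ideals I, J of R) if and only if R is a multiplication ring (i.e., for all ideals I ⊆ J of R there exists an ideal K of R with I = J·K). -/

import Mathlib

/-- For ideals `I J` of a commutative ring, `I → J = {x | x • I ⊆ J}` is `J.colon I`.
BLR-1: `I ⊓ J = I * (I → J)` for all ideals. Multiplication ring: for all `I ≤ J`
there is `K` with `I = J * K`. -/
theorem stmt_0 {R : Type*} [CommRing R] :
    (∀ I J : Ideal R, I ⊓ J = I * (J.colon I)) ↔
      (∀ I J : Ideal R, I ≤ J → ∃ K : Ideal R, I = J * K) := by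
  constructor
  · intro h I J hIJ
    refine ⟨I.colon J, ?_⟩
    have := h J I
    rwa [inf_eq_right.mpr hIJ] at this
  · intro h I J
    obtain ⟨K, hK⟩ := h (I ⊓ J) I inf_le_left
    apply le_antisymm
    · have hKle : K ≤ J.colon I := by
        intro x hx
        rw [Submodule.mem_colon]
        intro i hi
        have : i * x ∈ I * K := Ideal.mul_mem_mul hi hx
        rw [← hK] at this
        simpa [mul_comm] using this.2
      calc I ⊓ J = I * K := hK
        _ ≤ I * (J.colon I) := Ideal.mul_mono_right hKle
    · refine le_inf (Ideal.mul_le_left.trans ?_) ?_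
      · exact le_refl I
      · rw [Ideal.mul_comm]
        exact fun x hx => Submodule.mul_le.mpr
          (fun a ha b hb => (Submodule.mem_colon.mp ha) b hb) hx
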